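/- Let a and b be effects and e a projection in a unital C*-algebra. Then e ≤ √a · b · √a if and only if e ≤ a and e ≤ b. -/

import Mathlib

set_option synthInstance.maxHeartbeats 1000000

section Aux

variable {A : Type*} [CStarAlgebra A] [PartialOrder A] [StarOrderedRing A]

/-- If `p` is a projection, `b ≤ 1`, and `p * b * p = p`, then `b * p = p`. -/
lemma aux_absorb {p b : A} (hp : star p = p ∧ p * p = p) (hb1 : b ≤ 1)
    (hpbp : p * b * p = p) : b * p = p := by
  have hb0' : (0 : A) ≤ 1 - b := sub_nonneg.2 hb1
  set c := CFC.sqrt (1 - b) with hc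
  have hcc : c * c = 1 - b := CFC.sqrt_mul_sqrt_self _ hb0'
  have hcsa : IsSelfAdjoint c := IsSelfAdjoint.of_nonneg (CFC.sqrt_nonneg _)
  have key : star (c * p) * (c * p) = 0 := by
    rw [star_mul, hcsa.star_eq, hp.1]
    have h1 : p * c * (c * p) = p * (c * c) * p := by noncomm_ring
    rw [h1, hcc, mul_sub, mul_one, sub_mul, hp.2, hpbp, sub_self]
  have hcp : c * p = 0 := (CStarRing.star_mul_self_eq_zero_iff _).mp key
  have h2 : (1 - b) * p = 0 := by rw [← hcc, mul_assoc, hcp, mul_zero]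
  have h3 := sub_eq_zero.mp (by rwa [sub_mul, one_mul] at h2)
  exact h3.symm

/-- If `p` is a projection with `b * p = p` and `p * b = p` and `0 ≤ b`, then `p ≤ b`. -/
lemma aux_le {p b : A} (hp : star p = p ∧ p * p = p) (hb0 : 0 ≤ b)
    (hbp : b * p = p) (hpb : p * b = p) : p ≤ b := by
  have h1 : (0 : A) ≤ star (1 - p) * b * (1 - p) :=
    star_left_conjugate_nonneg hb0 _
  have h2 : star (1 - p) * b * (1 - p) = b - p := by
    rw [star_sub, star_one, hp.1]
    have h3 : (1 - p) * b * (1 - p) = b - p * b - b * p + p * (b * p) := by noncomm_ring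
    rw [h3, hbp, hpb, hp.2]
    noncomm_ring
  rw [h2] at h1
  exact sub_nonneg.mp h1

/-- `√a ≤ 1` when `0 ≤ a ≤ 1`. -/
lemma aux_sqrt_le_one {a : A} (ha0 : 0 ≤ a) (ha1 : a ≤ 1) : CFC.sqrt a ≤ 1 := by
  have hs0 : (0 : A) ≤ CFC.sqrt a := (CFC.sqrt_nonneg _)
  rw [← CStarAlgebra.norm_le_one_iff_of_nonneg _ hs0]
  have hsa : IsSelfAdjoint (CFC.sqrt a) := IsSelfAdjoint.of_nonneg hs0
  have h : ‖CFC.sqrt a‖ * ‖CFC.sqrt a‖ = ‖a‖ := by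
    rw [← CStarRing.norm_star_mul_self, hsa.star_eq, CFC.sqrt_mul_sqrt_self _ ha0]
  have hna : ‖a‖ ≤ 1 := (CStarAlgebra.norm_le_one_iff_of_nonneg _ ha0).mpr ha1
  nlinarith [norm_nonneg (CFC.sqrt a)]

/-- `a ≤ √a` when `0 ≤ a ≤ 1`. -/
lemma aux_le_sqrt {a : A} (ha0 : 0 ≤ a) (ha1 : a ≤ 1) : a ≤ CFC.sqrt a := by
  have hs0 : (0 : A) ≤ CFC.sqrt a := (CFC.sqrt_nonneg _)
  have hs1 : CFC.sqrt a ≤ 1 := aux_sqrt_le_one ha0 ha1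
  have := CStarAlgebra.pow_antitone hs0 hs1 (by norm_num : (1 : ℕ) ≤ 2)
  simpa [pow_two, CFC.sqrt_mul_sqrt_self _ ha0] using this

end Aux

/-- For effects `a`, `b` and a projection `e` of a unital C*-algebra:
`e ≤ √a * b * √a` if and only if `e ≤ a` and `e ≤ b`. -/
theorem projection_le_sqrt_mul_sqrt_iff
    {A : Type*} [CStarAlgebra A] [PartialOrder A] [StarOrderedRing A]
    (a b e : A) (ha0 : 0 ≤ a) (ha1 : a ≤ 1) (hb0 : 0 ≤ b) (hb1 : b ≤ 1)
    (he : star e = e ∧ e * e = e) :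
    e ≤ CFC.sqrt a * b * CFC.sqrt a ↔ e ≤ a ∧ e ≤ b := by
  set s := CFC.sqrt a with hs
  have hs0 : (0 : A) ≤ s := (CFC.sqrt_nonneg _)
  have hssa : IsSelfAdjoint s := IsSelfAdjoint.of_nonneg hs0
  have hss : s * s = a := CFC.sqrt_mul_sqrt_self _ ha0
  have hesa : IsSelfAdjoint e := he.1
  have hs1 : s ≤ 1 := aux_sqrt_le_one ha0 ha1
  have has : a ≤ s := aux_le_sqrt ha0 ha1
  -- s * e = e and e * s = e whenever e ≤ a
  have hkey : ∀ _ : e ≤ a, s * e = e ∧ e * s = e := by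
    intro hea
    have hes : e ≤ s := hea.trans has
    have h1 : e * s * e ≤ e * 1 * e := hesa.conjugate_le_conjugate hs1
    have h2 : e ≤ e * s * e := by
      calc e = e * e * e := by rw [he.2, he.2]
        _ ≤ e * s * e := by
            simpa [hesa.star_eq] using star_left_conjugate_le_conjugate hes e
    have hese : e * s * e = e := le_antisymm (by simpa [he.2] using h1) h2
    have hse : s * e = e := aux_absorb he hs1 hese
    have hes' : e * s = e := by
      have := congrArg star hse
      rwa [star_mul, hesa.star_eq, hssa.star_eq] at this
    exact ⟨hse, hes'⟩
  constructor
  · intro h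
    have hsbs : s * b * s ≤ a := by
      have := hssa.conjugate_le_conjugate hb1
      rwa [mul_one, hss] at this
    have hea : e ≤ a := h.trans hsbs
    obtain ⟨hse, hes'⟩ := hkey hea
    refine ⟨hea, ?_⟩
    -- conjugate h by e : e ≤ e * b * e
    have h3 : e * e * e ≤ e * (s * b * s) * e := by
      simpa [hesa.star_eq] using star_left_conjugate_le_conjugate h e
    have h4 : e ≤ e * b * e := by
      calc e = e * e * e := by rw [he.2, he.2]
        _ ≤ e * (s * b * s) * e := h3
        _ = e * b * e := by
            have hrearr : e * (s * b * s) * e = (e * s) * b * (s * e) := by noncomm_ring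
            rw [hrearr, hes', hse]
    have h5 : e * b * e ≤ e := by
      have := hesa.conjugate_le_conjugate hb1
      simpa [he.2] using this
    have hebe : e * b * e = e := le_antisymm h5 h4
    have hbe : b * e = e := aux_absorb he hb1 hebe
    have heb : e * b = e := by
      have hbsa : IsSelfAdjoint b := IsSelfAdjoint.of_nonneg hb0
      have := congrArg star hbe
      rwa [star_mul, hesa.star_eq, hbsa.star_eq] at this
    exact aux_le he hb0 hbe heb
  · rintro ⟨hea, heb⟩
    obtain ⟨hse, hes'⟩ := hkey hea
    have : e = s * e * s := by rw [hse, hes']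
    calc e = s * e * s := this
      _ ≤ s * b * s := hssa.conjugate_le_conjugate heb
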